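/- arXiv:q-alg/9710027 — 3 statements merged into one kernel-verified Lean document; each statement's English description precedes it below -/
import Mathlib

section
/- Let t be a real number with t > 1. Define the 2×2 matrices M(t), D(t), M̃(t) by M₁₁(t) = (t³+t⁻³)(t−t⁻¹)(t²+t⁻²)/(t⁶+t⁻⁶), M₂₂(t) = (t³−t⁻³)(t+t⁻¹)(t²+t⁻²)/(t⁶+t⁻⁶), M₁₂(t) = M₂₁(t) = (t³−t⁻³)(t²+t⁻²)/(t⁶+t⁻⁶), D(t) = diag(t−t⁻¹, t³−t⁻³), and M̃(t) = [[t²−t⁻², −(t³−t⁻³)], [−(t³−t⁻³), t⁶−t⁻⁶]]. Then M̃(t)·D(t)⁻¹·M(t) = D(t); equivalently D(t)·M(t)⁻¹·D(t) = M̃(t). -/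
open Matrix

noncomputable def DinvG2 (t : ℝ) : Matrix (Fin 2) (Fin 2) ℝ :=
  !![(t - t⁻¹)⁻¹, 0; 0, (t ^ (3:ℤ) - t ^ (-3:ℤ))⁻¹]

set_option maxHeartbeats 1000000

/-- The matrix `M(t)` of the G₂ case. -/
noncomputable def MG2 (t : ℝ) : Matrix (Fin 2) (Fin 2) ℝ :=
  !![(t ^ (3:ℤ) + t ^ (-3:ℤ)) * (t - t⁻¹) * (t ^ (2:ℤ) + t ^ (-2:ℤ)) / (t ^ (6:ℤ) + t ^ (-6:ℤ)),
     (t ^ (3:ℤ) - t ^ (-3:ℤ)) * (t ^ (2:ℤ) + t ^ (-2:ℤ)) / (t ^ (6:ℤ) + t ^ (-6:ℤ));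
     (t ^ (3:ℤ) - t ^ (-3:ℤ)) * (t ^ (2:ℤ) + t ^ (-2:ℤ)) / (t ^ (6:ℤ) + t ^ (-6:ℤ)),
     (t ^ (3:ℤ) - t ^ (-3:ℤ)) * (t + t⁻¹) * (t ^ (2:ℤ) + t ^ (-2:ℤ)) / (t ^ (6:ℤ) + t ^ (-6:ℤ))]

/-- The diagonal matrix `D(t)` of the G₂ case. -/
noncomputable def DG2 (t : ℝ) : Matrix (Fin 2) (Fin 2) ℝ :=
  !![t - t⁻¹, 0;
     0, t ^ (3:ℤ) - t ^ (-3:ℤ)]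

/-- The deformed symmetrized Cartan matrix `M̃(t)` of G₂. -/
noncomputable def MtG2 (t : ℝ) : Matrix (Fin 2) (Fin 2) ℝ :=
  !![t ^ (2:ℤ) - t ^ (-2:ℤ), -(t ^ (3:ℤ) - t ^ (-3:ℤ));
     -(t ^ (3:ℤ) - t ^ (-3:ℤ)), t ^ (6:ℤ) - t ^ (-6:ℤ)]

theorem stmt_0 (t : ℝ) (ht : 1 < t) :
    MtG2 t * (DG2 t)⁻¹ * MG2 t = DG2 t ∧
    DG2 t * (MG2 t)⁻¹ * DG2 t = MtG2 t := by
  have ht0 : (0:ℝ) < t := lt_trans one_pos ht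
  have htne : t ≠ 0 := ne_of_gt ht0
  have hinv : t⁻¹ < 1 := inv_lt_one_of_one_lt₀ ht
  have hinv0 : 0 < t⁻¹ := inv_pos.2 ht0
  have h1 : t - t⁻¹ ≠ 0 := by nlinarith
  have e2 : t ^ (2:ℤ) = t ^ (2:ℕ) := zpow_natCast t 2
  have e2' : t ^ (-2:ℤ) = (t ^ (2:ℕ))⁻¹ := by
    rw [show (-2:ℤ) = -(2:ℕ) by norm_num, _root_.zpow_neg, zpow_natCast]
  have e3 : t ^ (3:ℤ) = t ^ (3:ℕ) := zpow_natCast t 3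
  have e3' : t ^ (-3:ℤ) = (t ^ (3:ℕ))⁻¹ := by
    rw [show (-3:ℤ) = -(3:ℕ) by norm_num, _root_.zpow_neg, zpow_natCast]
  have e6 : t ^ (6:ℤ) = t ^ (6:ℕ) := zpow_natCast t 6
  have e6' : t ^ (-6:ℤ) = (t ^ (6:ℕ))⁻¹ := by
    rw [show (-6:ℤ) = -(6:ℕ) by norm_num, _root_.zpow_neg, zpow_natCast]
  have p1 : t ^ 2 - 1 ≠ 0 := by nlinarith
  have p3 : t ^ 6 - 1 ≠ 0 := by
    have h6 : 1 < t ^ 6 := one_lt_pow₀ ht (by norm_num)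
    nlinarith
  have p6 : t ^ 12 + 1 ≠ 0 := by positivity
  have r1 : t - t⁻¹ = (t ^ 2 - 1) / t := by field_simp
  have r1p : t + t⁻¹ = (t ^ 2 + 1) / t := by field_simp
  have r2 : t ^ 2 - (t ^ 2)⁻¹ = (t ^ 4 - 1) / t ^ 2 := by field_simp
  have r2p : t ^ 2 + (t ^ 2)⁻¹ = (t ^ 4 + 1) / t ^ 2 := by field_simp
  have r3 : t ^ 3 - (t ^ 3)⁻¹ = (t ^ 6 - 1) / t ^ 3 := by field_simp
  have r3p : t ^ 3 + (t ^ 3)⁻¹ = (t ^ 6 + 1) / t ^ 3 := by field_simp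
  have r6 : t ^ 6 - (t ^ 6)⁻¹ = (t ^ 12 - 1) / t ^ 6 := by field_simp
  have r6p : t ^ 6 + (t ^ 6)⁻¹ = (t ^ 12 + 1) / t ^ 6 := by field_simp
  have h3n : t ^ (3:ℕ) - (t ^ (3:ℕ))⁻¹ ≠ 0 := by
    rw [r3]; exact div_ne_zero p3 (pow_ne_zero _ htne)
  have h3 : t ^ (3:ℤ) - t ^ (-3:ℤ) ≠ 0 := by rw [e3, e3']; exact h3n
  have hDl : DinvG2 t * DG2 t = 1 := by
    ext i j
    fin_cases i <;> fin_cases j <;>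
      simp [DinvG2, DG2, Matrix.mul_apply, Fin.sum_univ_two, e3, e3',
        inv_mul_cancel₀ h1, inv_mul_cancel₀ h3n]
  have hDr : DG2 t * DinvG2 t = 1 := by
    ext i j
    fin_cases i <;> fin_cases j <;>
      simp [DinvG2, DG2, Matrix.mul_apply, Fin.sum_univ_two, e3, e3',
        mul_inv_cancel₀ h1, mul_inv_cancel₀ h3n]
  have hDinv : (DG2 t)⁻¹ = DinvG2 t := inv_eq_left_inv hDl
  have eq1 : MtG2 t * DinvG2 t * MG2 t = DG2 t := by
    ext i j
    fin_cases i <;> fin_cases j <;>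
      · simp only [DinvG2, MtG2, MG2, DG2, Matrix.mul_apply, Fin.sum_univ_two,
          Matrix.cons_val', Matrix.cons_val_zero, Matrix.cons_val_one, Matrix.head_cons,
          Matrix.head_fin_const, Matrix.empty_val', Matrix.cons_val_fin_one,
          e2, e2', e3, e3', e6, e6', mul_zero, zero_mul, add_zero, zero_add,
          Fin.zero_eta, Fin.mk_one, Matrix.of_apply]
        simp only [r1, r1p, r2, r2p, r3, r3p, r6, r6p]
        field_simp
        ring
  have hMl : (DinvG2 t * MtG2 t * DinvG2 t) * MG2 t = 1 := by
    calc (DinvG2 t * MtG2 t * DinvG2 t) * MG2 t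
        = DinvG2 t * (MtG2 t * DinvG2 t * MG2 t) := by noncomm_ring
      _ = DinvG2 t * DG2 t := by rw [eq1]
      _ = 1 := hDl
  have hMinv : (MG2 t)⁻¹ = DinvG2 t * MtG2 t * DinvG2 t := inv_eq_left_inv hMl
  refine ⟨by rw [hDinv]; exact eq1, ?_⟩
  rw [hMinv]
  calc DG2 t * (DinvG2 t * MtG2 t * DinvG2 t) * DG2 t
      = (DG2 t * DinvG2 t) * MtG2 t * (DinvG2 t * DG2 t) := by noncomm_ring
    _ = MtG2 t := by rw [hDr, hDl, one_mul, mul_one]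
end

section
/- Let t be a real number with t > 1. Define the symmetric 6×6 matrix M(t) with entries: M₁₁ = M₅₅ = (t−t⁻¹)(t⁸−t⁻⁸)/((t⁶+t⁻⁶)(t³−t⁻³)); M₁₂ = M₄₅ = (t−t⁻¹)(t⁵−t⁻⁵)(t²+t⁻²)/((t⁶+t⁻⁶)(t³−t⁻³)); M₂₂ = M₄₄ = (t⁴−t⁻⁴)(t⁵−t⁻⁵)/((t⁶+t⁻⁶)(t³−t⁻³)); M₁₃ = M₂₆ = M₄₆ = M₃₅ = (t⁴−t⁻⁴)/(t⁶+t⁻⁶); M₂₃ = M₃₄ = (t⁴−t⁻⁴)(t+t⁻¹)/(t⁶+t⁻⁶); M₃₃ = (t³−t⁻³)(t+t⁻¹)(t²+t⁻²)/(t⁶+t⁻⁶); M₁₆ = M₅₆ = (t−t⁻¹)(t²+t⁻²)/(t⁶+t⁻⁶); M₃₆ = (t³−t⁻³)(t²+t⁻²)/(t⁶+t⁻⁶); M₆₆ = (t⁴−t⁻⁴)(t³+t⁻³)/((t+t⁻¹)(t⁶+t⁻⁶)); M₁₄ = M₂₅ = (t²−t⁻²)(t⁴−t⁻⁴)/((t⁶+t⁻⁶)(t³−t⁻³));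 M₂₄ = (t²−t⁻²)(t⁴−t⁻⁴)(t+t⁻¹)/((t⁶+t⁻⁶)(t³−t⁻³)); M₁₅ = (t−t⁻¹)(t⁴−t⁻⁴)/((t⁶+t⁻⁶)(t³−t⁻³)). Define the 6×6 matrix M̃(t) with diagonal entries t²−t⁻² and entries t⁻¹−t in positions (1,2),(2,3),(3,4),(4,5),(3,6) and their transposes, all other entries zero. Then M(t)·M̃(t) = (t−t⁻¹)²·I₆. -/
open Matrix

/-- `t^k - t^(-k)` -/
noncomputable def fm (t : ℝ) (k : ℤ) : ℝ := t ^ k - t ^ (-k)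

/-- `t^k + t^(-k)` -/
noncomputable def fp (t : ℝ) (k : ℤ) : ℝ := t ^ k + t ^ (-k)

/-- The symmetric matrix `M(t)` of the E₆ case. -/
noncomputable def ME6 (t : ℝ) : Matrix (Fin 6) (Fin 6) ℝ :=
  !![fm t 1 * fm t 8 / (fp t 6 * fm t 3),
     fm t 1 * fm t 5 * fp t 2 / (fp t 6 * fm t 3),
     fm t 4 / fp t 6,
     fm t 2 * fm t 4 / (fp t 6 * fm t 3),
     fm t 1 * fm t 4 / (fp t 6 * fm t 3),
     fm t 1 * fp t 2 / fp t 6;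
     fm t 1 * fm t 5 * fp t 2 / (fp t 6 * fm t 3),
     fm t 4 * fm t 5 / (fp t 6 * fm t 3),
     fm t 4 * fp t 1 / fp t 6,
     fm t 2 * fm t 4 * fp t 1 / (fp t 6 * fm t 3),
     fm t 2 * fm t 4 / (fp t 6 * fm t 3),
     fm t 4 / fp t 6;
     fm t 4 / fp t 6,
     fm t 4 * fp t 1 / fp t 6,
     fm t 3 * fp t 1 * fp t 2 / fp t 6,
     fm t 4 * fp t 1 / fp t 6,
     fm t 4 / fp t 6,
     fm t 3 * fp t 2 / fp t 6;
     fm t 2 * fm t 4 / (fp t 6 * fm t 3),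
     fm t 2 * fm t 4 * fp t 1 / (fp t 6 * fm t 3),
     fm t 4 * fp t 1 / fp t 6,
     fm t 4 * fm t 5 / (fp t 6 * fm t 3),
     fm t 1 * fm t 5 * fp t 2 / (fp t 6 * fm t 3),
     fm t 4 / fp t 6;
     fm t 1 * fm t 4 / (fp t 6 * fm t 3),
     fm t 2 * fm t 4 / (fp t 6 * fm t 3),
     fm t 4 / fp t 6,
     fm t 1 * fm t 5 * fp t 2 / (fp t 6 * fm t 3),
     fm t 1 * fm t 8 / (fp t 6 * fm t 3),
     fm t 1 * fp t 2 / fp t 6;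
     fm t 1 * fp t 2 / fp t 6,
     fm t 4 / fp t 6,
     fm t 3 * fp t 2 / fp t 6,
     fm t 4 / fp t 6,
     fm t 1 * fp t 2 / fp t 6,
     fm t 4 * fp t 3 / (fp t 1 * fp t 6)]

/-- The deformed Cartan-type matrix `M̃(t)` of E₆. -/
noncomputable def MtE6 (t : ℝ) : Matrix (Fin 6) (Fin 6) ℝ :=
  !![t ^ (2:ℤ) - t ^ (-2:ℤ), t⁻¹ - t, 0, 0, 0, 0;
     t⁻¹ - t, t ^ (2:ℤ) - t ^ (-2:ℤ), t⁻¹ - t, 0, 0, 0;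
     0, t⁻¹ - t, t ^ (2:ℤ) - t ^ (-2:ℤ), t⁻¹ - t, 0, t⁻¹ - t;
     0, 0, t⁻¹ - t, t ^ (2:ℤ) - t ^ (-2:ℤ), t⁻¹ - t, 0;
     0, 0, 0, t⁻¹ - t, t ^ (2:ℤ) - t ^ (-2:ℤ), 0;
     0, 0, t⁻¹ - t, 0, 0, t ^ (2:ℤ) - t ^ (-2:ℤ)]

@[simp] lemma cons_val_five {α : Type*} (a : α) (v : Fin 5 → α) :
    Matrix.vecCons a v 5 = v 4 := rfl

set_option maxHeartbeats 8000000 in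
theorem stmt_3 (t : ℝ) (ht : 1 < t) :
    ME6 t * MtE6 t = ((t - t⁻¹) ^ 2) • (1 : Matrix (Fin 6) (Fin 6) ℝ) := by
  have ht0 : (0:ℝ) < t := zero_lt_one.trans ht
  have htne : t ≠ 0 := ht0.ne'
  have h12 : t ^ 12 + 1 ≠ 0 := by positivity
  have h2 : t ^ 2 + 1 ≠ 0 := by positivity
  have h6 : t ^ 6 - 1 ≠ 0 := by nlinarith [one_lt_pow₀ ht (by norm_num : (6:ℕ) ≠ 0)]
  have e6 : t ^ (6:ℤ) + t ^ (-6:ℤ) = (t ^ 12 + 1) / t ^ 6 := by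
    rw [_root_.zpow_neg]; simp only [zpow_ofNat]; field_simp
  have e3 : t ^ (3:ℤ) - t ^ (-3:ℤ) = (t ^ 6 - 1) / t ^ 3 := by
    rw [_root_.zpow_neg]; simp only [zpow_ofNat]; field_simp
  have e1 : t ^ (1:ℤ) + t ^ (-1:ℤ) = (t ^ 2 + 1) / t := by
    rw [_root_.zpow_neg]; simp only [zpow_one]; field_simp
  ext i j
  fin_cases i <;> fin_cases j <;>
  · rw [Matrix.mul_apply]
    simp [ME6, MtE6, Fin.sum_univ_six, Matrix.one_apply, Matrix.vecHead, Matrix.vecTail,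
      Matrix.cons_val_succ]
    simp only [fm, fp, e6, e3, e1]
    simp only [_root_.zpow_neg, zpow_ofNat, zpow_one]
    field_simp
    ring
end

section
/- Fix an integer n ≥ 4 and a real number t > 1. Define the symmetric n×n matrix M(t): for 1 ≤ i,j ≤ n−2, M_ij(t) = (t^{min(i,j)} − t^{−min(i,j)})(t^{n−1−max(i,j)} + t^{−(n−1−max(i,j))})/(t^{n−1} + t^{−(n−1)}); for 1 ≤ i ≤ n−2, M_{n,i}(t) = M_{n−1,i}(t) = (t^i − t^{−i})/(t^{n−1} + t^{−(n−1)}); M_{n,n−1}(t) = (t^{n−2} − t^{−(n−2)})/((t+t⁻¹)(t^{n−1}+t^{−(n−1)})); M_{n−1,n−1}(t) = M_{n,n}(t) = (t^n − t^{−n})/((t+t⁻¹)(t^{n−1}+t^{−(n−1)})). Define the n×n matrix M̃(t) with diagonal entries t²−t⁻², entries −(t−t⁻¹) in positions (i,i+1) and (i+1,i) for 1 ≤ i ≤ n−2 and in positions (n−2,n),(n,n−2), and zeros elsewhere. Then M(t)·M̃(t) = (t−t⁻¹)²·Iₙ. -/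
open Matrix

/-- The matrix `M(t)` of the Dₙ case (indices `i j : Fin n` encode the
1-based indices `i+1`, `j+1`). -/
noncomputable def MDn (n : ℕ) (t : ℝ) : Matrix (Fin n) (Fin n) ℝ :=
  fun i j =>
    let I : ℕ := i.1 + 1
    let J : ℕ := j.1 + 1
    if I ≤ n - 2 ∧ J ≤ n - 2 then
      (t ^ (min I J : ℤ) - t ^ (-(min I J : ℤ))) *
        (t ^ ((n : ℤ) - 1 - (max I J : ℤ)) + t ^ (-((n : ℤ) - 1 - (max I J : ℤ)))) /
        (t ^ ((n : ℤ) - 1) + t ^ (-((n : ℤ) - 1)))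
    else if n - 1 ≤ I ∧ J ≤ n - 2 then
      (t ^ (J : ℤ) - t ^ (-(J : ℤ))) / (t ^ ((n : ℤ) - 1) + t ^ (-((n : ℤ) - 1)))
    else if n - 1 ≤ J ∧ I ≤ n - 2 then
      (t ^ (I : ℤ) - t ^ (-(I : ℤ))) / (t ^ ((n : ℤ) - 1) + t ^ (-((n : ℤ) - 1)))
    else if I ≠ J then
      (t ^ ((n : ℤ) - 2) - t ^ (-((n : ℤ) - 2))) /
        ((t + t⁻¹) * (t ^ ((n : ℤ) - 1) + t ^ (-((n : ℤ) - 1))))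
    else
      (t ^ (n : ℤ) - t ^ (-(n : ℤ))) /
        ((t + t⁻¹) * (t ^ ((n : ℤ) - 1) + t ^ (-((n : ℤ) - 1))))

/-- The deformed Cartan-type matrix `M̃(t)` of Dₙ. -/
noncomputable def MtDn (n : ℕ) (t : ℝ) : Matrix (Fin n) (Fin n) ℝ :=
  fun i j =>
    let I : ℕ := i.1 + 1
    let J : ℕ := j.1 + 1
    if I = J then t ^ (2:ℤ) - t ^ (-2:ℤ)
    else if (J = I + 1 ∧ I ≤ n - 2) ∨ (I = J + 1 ∧ J ≤ n - 2) ∨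
        (I = n - 2 ∧ J = n) ∨ (I = n ∧ J = n - 2) then -(t - t⁻¹)
    else 0

section aux

variable {n : ℕ} {t : ℝ}

lemma MDn_A (i j : Fin n) (h1 : i.1 + 1 ≤ n - 2) (h2 : j.1 + 1 ≤ n - 2) :
    MDn n t i j =
      (t ^ (min ((i.1+1 : ℕ) : ℤ) ((j.1+1 : ℕ) : ℤ)) - t ^ (-(min ((i.1+1 : ℕ) : ℤ) ((j.1+1 : ℕ) : ℤ)))) *
        (t ^ ((n : ℤ) - 1 - max ((i.1+1 : ℕ) : ℤ) ((j.1+1 : ℕ) : ℤ)) +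
          t ^ (-((n : ℤ) - 1 - max ((i.1+1 : ℕ) : ℤ) ((j.1+1 : ℕ) : ℤ)))) /
        (t ^ ((n : ℤ) - 1) + t ^ (-((n : ℤ) - 1))) := by
  simp only [MDn]
  rw [if_pos ⟨h1, h2⟩]

lemma MDn_row (i j : Fin n) (h1 : n - 1 ≤ i.1 + 1) (h2 : j.1 + 1 ≤ n - 2) :
    MDn n t i j = (t ^ ((j.1+1 : ℕ) : ℤ) - t ^ (-((j.1+1 : ℕ) : ℤ))) /
      (t ^ ((n : ℤ) - 1) + t ^ (-((n : ℤ) - 1))) := by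
  simp only [MDn]
  rw [if_neg (by omega), if_pos ⟨h1, h2⟩]

lemma MDn_col (i j : Fin n) (h1 : i.1 + 1 ≤ n - 2) (h2 : n - 1 ≤ j.1 + 1) :
    MDn n t i j = (t ^ ((i.1+1 : ℕ) : ℤ) - t ^ (-((i.1+1 : ℕ) : ℤ))) /
      (t ^ ((n : ℤ) - 1) + t ^ (-((n : ℤ) - 1))) := by
  simp only [MDn]
  rw [if_neg (by omega), if_neg (by omega), if_pos ⟨h2, h1⟩]

lemma MDn_spoff (i j : Fin n) (hn : 2 ≤ n) (h1 : n - 1 ≤ i.1 + 1) (h2 : n - 1 ≤ j.1 + 1)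
    (hne : i.1 ≠ j.1) :
    MDn n t i j = (t ^ ((n : ℤ) - 2) - t ^ (-((n : ℤ) - 2))) /
      ((t + t⁻¹) * (t ^ ((n : ℤ) - 1) + t ^ (-((n : ℤ) - 1)))) := by
  simp only [MDn]
  rw [if_neg (by omega), if_neg (by omega), if_neg (by omega), if_pos (by omega)]

lemma MDn_spdiag (i j : Fin n) (hn : 2 ≤ n) (h1 : n - 1 ≤ i.1 + 1) (heq : i.1 = j.1) :
    MDn n t i j = (t ^ (n : ℤ) - t ^ (-(n : ℤ))) /
      ((t + t⁻¹) * (t ^ ((n : ℤ) - 1) + t ^ (-((n : ℤ) - 1)))) := by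
  simp only [MDn]
  rw [if_neg (by omega), if_neg (by omega), if_neg (by omega), if_neg (by omega)]

end aux

set_option maxHeartbeats 2000000 in
theorem stmt_6 (n : ℕ) (hn : 4 ≤ n) (t : ℝ) (ht : 1 < t) :
    MDn n t * MtDn n t = ((t - t⁻¹) ^ 2) • (1 : Matrix (Fin n) (Fin n) ℝ) := by
  have ht0 : (0:ℝ) < t := lt_trans one_pos ht
  have h0 : t ≠ 0 := ne_of_gt ht0
  have hpn : t ^ n ≠ 0 := pow_ne_zero _ h0
  ext i j
  rw [Matrix.mul_apply, Matrix.smul_apply, Matrix.one_apply]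
  have hi := i.2
  have hj := j.2
  by_cases hj4 : j.1 = n - 1
  · -- column J = n : neighbor K = n-2, i.e. index n-3
    obtain ⟨a, ha⟩ : ∃ a : Fin n, a.1 = n - 3 := ⟨⟨n-3, by omega⟩, rfl⟩
    have hM : ∀ k : Fin n, MtDn n t k j =
        (if k = j then (t ^ (2:ℤ) - t ^ (-2:ℤ)) else 0) +
        (if k = a then -(t - t⁻¹) else 0) := by
      intro k
      have hk := k.2
      simp only [MtDn, Fin.ext_iff, hj4, ha]
      split_ifs <;> first | ring1 | (exfalso; omega)
    simp only [hM, mul_add, Finset.sum_add_distrib, mul_ite, mul_zero,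
      Finset.sum_ite_eq', Finset.mem_univ, if_true, smul_eq_mul, mul_one]
    by_cases hc1 : i.1 + 1 ≤ n - 2
    · rw [if_neg (show ¬ i = j by rintro rfl; omega)]
      rw [MDn_col i j hc1 (by omega), MDn_A i a hc1 (by omega)]
      rw [show (min ((i.1+1 : ℕ) : ℤ) ((a.1+1 : ℕ) : ℤ)) = (i.1:ℤ) + 1 by omega,
          show (max ((i.1+1 : ℕ) : ℤ) ((a.1+1 : ℕ) : ℤ)) = (n:ℤ) - 2 by omega,
          show (((i.1+1 : ℕ)) : ℤ) = (i.1:ℤ) + 1 by omega]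
      have hpi : t ^ i.1 ≠ 0 := pow_ne_zero _ h0
      simp only [zpow_add₀ h0, zpow_sub₀ h0, _root_.zpow_neg, zpow_one, zpow_natCast, zpow_ofNat]
      field_simp
      ring
    · by_cases hc2 : i.1 = n - 2
      · rw [if_neg (show ¬ i = j by rintro rfl; omega)]
        rw [MDn_spoff i j (by omega) (by omega) (by omega) (by omega),
            MDn_row i a (by omega) (by omega)]
        rw [show (((a.1+1 : ℕ)) : ℤ) = (n:ℤ) - 2 by omega]
        simp only [zpow_add₀ h0, zpow_sub₀ h0, _root_.zpow_neg, zpow_one, zpow_natCast, zpow_ofNat]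
        field_simp
        ring
      · have hij : i = j := Fin.ext (by omega)
        rw [if_pos hij]
        rw [MDn_spdiag i j (by omega) (by omega) (by omega),
            MDn_row i a (by omega) (by omega)]
        rw [show (((a.1+1 : ℕ)) : ℤ) = (n:ℤ) - 2 by omega]
        simp only [zpow_add₀ h0, zpow_sub₀ h0, _root_.zpow_neg, zpow_one, zpow_natCast, zpow_ofNat]
        field_simp
        ring
  · by_cases hj3 : j.1 = n - 2
    · -- column J = n-1 : neighbor K = n-2, index n-3
      obtain ⟨a, ha⟩ : ∃ a : Fin n, a.1 = n - 3 := ⟨⟨n-3, by omega⟩, rfl⟩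
      have hM : ∀ k : Fin n, MtDn n t k j =
          (if k = j then (t ^ (2:ℤ) - t ^ (-2:ℤ)) else 0) +
          (if k = a then -(t - t⁻¹) else 0) := by
        intro k
        have hk := k.2
        simp only [MtDn, Fin.ext_iff, hj3, ha]
        split_ifs <;> first | ring1 | (exfalso; omega)
      simp only [hM, mul_add, Finset.sum_add_distrib, mul_ite, mul_zero,
        Finset.sum_ite_eq', Finset.mem_univ, if_true, smul_eq_mul, mul_one]
      by_cases hc1 : i.1 + 1 ≤ n - 2
      · rw [if_neg (show ¬ i = j by rintro rfl; omega)]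
        rw [MDn_col i j hc1 (by omega), MDn_A i a hc1 (by omega)]
        rw [show (min ((i.1+1 : ℕ) : ℤ) ((a.1+1 : ℕ) : ℤ)) = (i.1:ℤ) + 1 by omega,
            show (max ((i.1+1 : ℕ) : ℤ) ((a.1+1 : ℕ) : ℤ)) = (n:ℤ) - 2 by omega,
            show (((i.1+1 : ℕ)) : ℤ) = (i.1:ℤ) + 1 by omega]
        have hpi : t ^ i.1 ≠ 0 := pow_ne_zero _ h0
        simp only [zpow_add₀ h0, zpow_sub₀ h0, _root_.zpow_neg, zpow_one, zpow_natCast, zpow_ofNat]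
        field_simp
        ring
      · by_cases hc2 : i.1 = n - 2
        · have hij : i = j := Fin.ext (by omega)
          rw [if_pos hij]
          rw [MDn_spdiag i j (by omega) (by omega) (by omega),
              MDn_row i a (by omega) (by omega)]
          rw [show (((a.1+1 : ℕ)) : ℤ) = (n:ℤ) - 2 by omega]
          simp only [zpow_add₀ h0, zpow_sub₀ h0, _root_.zpow_neg, zpow_one, zpow_natCast, zpow_ofNat]
          field_simp
          ring
        · rw [if_neg (show ¬ i = j by rintro rfl; omega)]
          rw [MDn_spoff i j (by omega) (by omega) (by omega) (by omega),
              MDn_row i a (by omega) (by omega)]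
          rw [show (((a.1+1 : ℕ)) : ℤ) = (n:ℤ) - 2 by omega]
          simp only [zpow_add₀ h0, zpow_sub₀ h0, _root_.zpow_neg, zpow_one, zpow_natCast, zpow_ofNat]
          field_simp
          ring
    · by_cases hj2 : j.1 = n - 3
      · -- column J = n-2 : neighbors K = n-3 (idx n-4), K = n-1 (idx n-2), K = n (idx n-1)
        obtain ⟨a, ha⟩ : ∃ a : Fin n, a.1 = n - 4 := ⟨⟨n-4, by omega⟩, rfl⟩
        obtain ⟨b, hb⟩ : ∃ b : Fin n, b.1 = n - 2 := ⟨⟨n-2, by omega⟩, rfl⟩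
        obtain ⟨c, hc⟩ : ∃ c : Fin n, c.1 = n - 1 := ⟨⟨n-1, by omega⟩, rfl⟩
        have hM : ∀ k : Fin n, MtDn n t k j =
            (if k = j then (t ^ (2:ℤ) - t ^ (-2:ℤ)) else 0) +
            ((if k = a then -(t - t⁻¹) else 0) +
             ((if k = b then -(t - t⁻¹) else 0) + (if k = c then -(t - t⁻¹) else 0))) := by
          intro k
          have hk := k.2
          simp only [MtDn, Fin.ext_iff, hj2, ha, hb, hc]
          split_ifs <;> first | ring1 | (exfalso; omega)
        simp only [hM, mul_add, Finset.sum_add_distrib, mul_ite, mul_zero,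
          Finset.sum_ite_eq', Finset.mem_univ, if_true, smul_eq_mul, mul_one]
        by_cases hc1 : i.1 + 1 ≤ n - 3
        · rw [if_neg (show ¬ i = j by rintro rfl; omega)]
          rw [MDn_A i j (by omega) (by omega), MDn_A i a (by omega) (by omega),
              MDn_col i b (by omega) (by omega), MDn_col i c (by omega) (by omega)]
          rw [show (min ((i.1+1 : ℕ) : ℤ) ((j.1+1 : ℕ) : ℤ)) = (i.1:ℤ) + 1 by omega,
              show (max ((i.1+1 : ℕ) : ℤ) ((j.1+1 : ℕ) : ℤ)) = (n:ℤ) - 2 by omega,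
              show (min ((i.1+1 : ℕ) : ℤ) ((a.1+1 : ℕ) : ℤ)) = (i.1:ℤ) + 1 by omega,
              show (max ((i.1+1 : ℕ) : ℤ) ((a.1+1 : ℕ) : ℤ)) = (n:ℤ) - 3 by omega,
              show (((i.1+1 : ℕ)) : ℤ) = (i.1:ℤ) + 1 by omega]
          have hpi : t ^ i.1 ≠ 0 := pow_ne_zero _ h0
          simp only [zpow_add₀ h0, zpow_sub₀ h0, _root_.zpow_neg, zpow_one, zpow_natCast, zpow_ofNat]
          field_simp
          ring
        · by_cases hc2 : i.1 = n - 3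
          · have hij : i = j := Fin.ext (by omega)
            rw [if_pos hij]
            rw [MDn_A i j (by omega) (by omega), MDn_A i a (by omega) (by omega),
                MDn_col i b (by omega) (by omega), MDn_col i c (by omega) (by omega)]
            rw [show (min ((i.1+1 : ℕ) : ℤ) ((j.1+1 : ℕ) : ℤ)) = (n:ℤ) - 2 by omega,
                show (max ((i.1+1 : ℕ) : ℤ) ((j.1+1 : ℕ) : ℤ)) = (n:ℤ) - 2 by omega,
                show (min ((i.1+1 : ℕ) : ℤ) ((a.1+1 : ℕ) : ℤ)) = (n:ℤ) - 3 by omega,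
                show (max ((i.1+1 : ℕ) : ℤ) ((a.1+1 : ℕ) : ℤ)) = (n:ℤ) - 2 by omega,
                show (((i.1+1 : ℕ)) : ℤ) = (n:ℤ) - 2 by omega]
            simp only [zpow_add₀ h0, zpow_sub₀ h0, _root_.zpow_neg, zpow_one, zpow_natCast, zpow_ofNat]
            field_simp
            ring
          · by_cases hc3 : i.1 = n - 2
            · rw [if_neg (show ¬ i = j by rintro rfl; omega)]
              rw [MDn_row i j (by omega) (by omega), MDn_row i a (by omega) (by omega),
                  MDn_spdiag i b (by omega) (by omega) (by omega),
                  MDn_spoff i c (by omega) (by omega) (by omega) (by omega)]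
              rw [show (((j.1+1 : ℕ)) : ℤ) = (n:ℤ) - 2 by omega,
                  show (((a.1+1 : ℕ)) : ℤ) = (n:ℤ) - 3 by omega]
              simp only [zpow_add₀ h0, zpow_sub₀ h0, _root_.zpow_neg, zpow_one, zpow_natCast, zpow_ofNat]
              field_simp
              ring
            · -- i.1 = n-1
              rw [if_neg (show ¬ i = j by rintro rfl; omega)]
              rw [MDn_row i j (by omega) (by omega), MDn_row i a (by omega) (by omega),
                  MDn_spoff i b (by omega) (by omega) (by omega) (by omega),
                  MDn_spdiag i c (by omega) (by omega) (by omega)]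
              rw [show (((j.1+1 : ℕ)) : ℤ) = (n:ℤ) - 2 by omega,
                  show (((a.1+1 : ℕ)) : ℤ) = (n:ℤ) - 3 by omega]
              simp only [zpow_add₀ h0, zpow_sub₀ h0, _root_.zpow_neg, zpow_one, zpow_natCast, zpow_ofNat]
              field_simp
              ring
      · by_cases hj1 : j.1 = 0
        · -- column J = 1 : neighbor K = 2, index 1
          obtain ⟨b, hb⟩ : ∃ b : Fin n, b.1 = 1 := ⟨⟨1, by omega⟩, rfl⟩
          have hM : ∀ k : Fin n, MtDn n t k j =
              (if k = j then (t ^ (2:ℤ) - t ^ (-2:ℤ)) else 0) +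
              (if k = b then -(t - t⁻¹) else 0) := by
            intro k
            have hk := k.2
            simp only [MtDn, Fin.ext_iff, hj1, hb]
            split_ifs <;> first | ring1 | (exfalso; omega)
          simp only [hM, mul_add, Finset.sum_add_distrib, mul_ite, mul_zero,
            Finset.sum_ite_eq', Finset.mem_univ, if_true, smul_eq_mul, mul_one]
          by_cases hc1 : i.1 = 0
          · have hij : i = j := Fin.ext (by omega)
            rw [if_pos hij]
            rw [MDn_A i j (by omega) (by omega), MDn_A i b (by omega) (by omega)]
            rw [show (min ((i.1+1 : ℕ) : ℤ) ((j.1+1 : ℕ) : ℤ)) = 1 by omega,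
                show (max ((i.1+1 : ℕ) : ℤ) ((j.1+1 : ℕ) : ℤ)) = 1 by omega,
                show (min ((i.1+1 : ℕ) : ℤ) ((b.1+1 : ℕ) : ℤ)) = 1 by omega,
                show (max ((i.1+1 : ℕ) : ℤ) ((b.1+1 : ℕ) : ℤ)) = 2 by omega]
            simp only [zpow_add₀ h0, zpow_sub₀ h0, _root_.zpow_neg, zpow_one, zpow_natCast, zpow_ofNat]
            field_simp
            ring
          · by_cases hc2 : i.1 + 1 ≤ n - 2
            · rw [if_neg (show ¬ i = j by rintro rfl; omega)]
              rw [MDn_A i j (by omega) (by omega), MDn_A i b (by omega) (by omega)]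
              rw [show (min ((i.1+1 : ℕ) : ℤ) ((j.1+1 : ℕ) : ℤ)) = 1 by omega,
                  show (max ((i.1+1 : ℕ) : ℤ) ((j.1+1 : ℕ) : ℤ)) = (i.1:ℤ) + 1 by omega,
                  show (min ((i.1+1 : ℕ) : ℤ) ((b.1+1 : ℕ) : ℤ)) = 2 by omega,
                  show (max ((i.1+1 : ℕ) : ℤ) ((b.1+1 : ℕ) : ℤ)) = (i.1:ℤ) + 1 by omega]
              have hpi : t ^ i.1 ≠ 0 := pow_ne_zero _ h0
              simp only [zpow_add₀ h0, zpow_sub₀ h0, _root_.zpow_neg, zpow_one, zpow_natCast, zpow_ofNat]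
              field_simp
              ring
            · rw [if_neg (show ¬ i = j by rintro rfl; omega)]
              rw [MDn_row i j (by omega) (by omega), MDn_row i b (by omega) (by omega)]
              rw [show (((j.1+1 : ℕ)) : ℤ) = 1 by omega,
                  show (((b.1+1 : ℕ)) : ℤ) = 2 by omega]
              simp only [zpow_add₀ h0, zpow_sub₀ h0, _root_.zpow_neg, zpow_one, zpow_natCast, zpow_ofNat]
              field_simp
              ring
        · -- middle column : 1 ≤ j.1 ≤ n-4 ; neighbors idx j.1-1 and j.1+1
          obtain ⟨a, ha⟩ : ∃ a : Fin n, a.1 = j.1 - 1 := ⟨⟨j.1-1, by omega⟩, rfl⟩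
          obtain ⟨b, hb⟩ : ∃ b : Fin n, b.1 = j.1 + 1 := ⟨⟨j.1+1, by omega⟩, rfl⟩
          have hM : ∀ k : Fin n, MtDn n t k j =
              (if k = j then (t ^ (2:ℤ) - t ^ (-2:ℤ)) else 0) +
              ((if k = a then -(t - t⁻¹) else 0) + (if k = b then -(t - t⁻¹) else 0)) := by
            intro k
            have hk := k.2
            simp only [MtDn, Fin.ext_iff, ha, hb]
            split_ifs <;> first | ring1 | (exfalso; omega)
          simp only [hM, mul_add, Finset.sum_add_distrib, mul_ite, mul_zero,
            Finset.sum_ite_eq', Finset.mem_univ, if_true, smul_eq_mul, mul_one]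
          have hpj : t ^ j.1 ≠ 0 := pow_ne_zero _ h0
          by_cases hc1 : i.1 < j.1
          · rw [if_neg (show ¬ i = j by rintro rfl; omega)]
            rw [MDn_A i j (by omega) (by omega), MDn_A i a (by omega) (by omega),
                MDn_A i b (by omega) (by omega)]
            rw [show (min ((i.1+1 : ℕ) : ℤ) ((j.1+1 : ℕ) : ℤ)) = (i.1:ℤ) + 1 by omega,
                show (max ((i.1+1 : ℕ) : ℤ) ((j.1+1 : ℕ) : ℤ)) = (j.1:ℤ) + 1 by omega,
                show (min ((i.1+1 : ℕ) : ℤ) ((a.1+1 : ℕ) : ℤ)) = (i.1:ℤ) + 1 by omega,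
                show (max ((i.1+1 : ℕ) : ℤ) ((a.1+1 : ℕ) : ℤ)) = (j.1:ℤ) by omega,
                show (min ((i.1+1 : ℕ) : ℤ) ((b.1+1 : ℕ) : ℤ)) = (i.1:ℤ) + 1 by omega,
                show (max ((i.1+1 : ℕ) : ℤ) ((b.1+1 : ℕ) : ℤ)) = (j.1:ℤ) + 2 by omega]
            have hpi : t ^ i.1 ≠ 0 := pow_ne_zero _ h0
            simp only [zpow_add₀ h0, zpow_sub₀ h0, _root_.zpow_neg, zpow_one, zpow_natCast, zpow_ofNat]
            field_simp
            ring
          · by_cases hc2 : i.1 = j.1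
            · have hij : i = j := Fin.ext (by omega)
              rw [if_pos hij]
              rw [MDn_A i j (by omega) (by omega), MDn_A i a (by omega) (by omega),
                  MDn_A i b (by omega) (by omega)]
              rw [show (min ((i.1+1 : ℕ) : ℤ) ((j.1+1 : ℕ) : ℤ)) = (j.1:ℤ) + 1 by omega,
                  show (max ((i.1+1 : ℕ) : ℤ) ((j.1+1 : ℕ) : ℤ)) = (j.1:ℤ) + 1 by omega,
                  show (min ((i.1+1 : ℕ) : ℤ) ((a.1+1 : ℕ) : ℤ)) = (j.1:ℤ) by omega,
                  show (max ((i.1+1 : ℕ) : ℤ) ((a.1+1 : ℕ) : ℤ)) = (j.1:ℤ) + 1 by omega,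
                  show (min ((i.1+1 : ℕ) : ℤ) ((b.1+1 : ℕ) : ℤ)) = (j.1:ℤ) + 1 by omega,
                  show (max ((i.1+1 : ℕ) : ℤ) ((b.1+1 : ℕ) : ℤ)) = (j.1:ℤ) + 2 by omega]
              simp only [zpow_add₀ h0, zpow_sub₀ h0, _root_.zpow_neg, zpow_one, zpow_natCast, zpow_ofNat]
              field_simp
              ring
            · by_cases hc3 : i.1 + 1 ≤ n - 2
              · rw [if_neg (show ¬ i = j by rintro rfl; omega)]
                rw [MDn_A i j (by omega) (by omega), MDn_A i a (by omega) (by omega),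
                    MDn_A i b (by omega) (by omega)]
                rw [show (min ((i.1+1 : ℕ) : ℤ) ((j.1+1 : ℕ) : ℤ)) = (j.1:ℤ) + 1 by omega,
                    show (max ((i.1+1 : ℕ) : ℤ) ((j.1+1 : ℕ) : ℤ)) = (i.1:ℤ) + 1 by omega,
                    show (min ((i.1+1 : ℕ) : ℤ) ((a.1+1 : ℕ) : ℤ)) = (j.1:ℤ) by omega,
                    show (max ((i.1+1 : ℕ) : ℤ) ((a.1+1 : ℕ) : ℤ)) = (i.1:ℤ) + 1 by omega,
                    show (min ((i.1+1 : ℕ) : ℤ) ((b.1+1 : ℕ) : ℤ)) = (j.1:ℤ) + 2 by omega,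
                    show (max ((i.1+1 : ℕ) : ℤ) ((b.1+1 : ℕ) : ℤ)) = (i.1:ℤ) + 1 by omega]
                have hpi : t ^ i.1 ≠ 0 := pow_ne_zero _ h0
                simp only [zpow_add₀ h0, zpow_sub₀ h0, _root_.zpow_neg, zpow_one, zpow_natCast, zpow_ofNat]
                field_simp
                ring
              · rw [if_neg (show ¬ i = j by rintro rfl; omega)]
                rw [MDn_row i j (by omega) (by omega), MDn_row i a (by omega) (by omega),
                    MDn_row i b (by omega) (by omega)]
                rw [show (((j.1+1 : ℕ)) : ℤ) = (j.1:ℤ) + 1 by omega,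
                    show (((a.1+1 : ℕ)) : ℤ) = (j.1:ℤ) by omega,
                    show (((b.1+1 : ℕ)) : ℤ) = (j.1:ℤ) + 2 by omega]
                simp only [zpow_add₀ h0, zpow_sub₀ h0, _root_.zpow_neg, zpow_one, zpow_natCast, zpow_ofNat]
                field_simp
                ring
end
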